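/- Finite speed of propagation: under the standing Assumption on I, J (interactions a_{ij} ≤ e^{-|i-j|}, row/column sums ≤ η, ∂_x J_i ≤ 0), for f ∈ D² depending on finitely many coordinates Λ(f), any k ∉ Λ(f), and any 0 < A ≤ 1/4, there exists B ≥ 8 such that whenever n_k := ⌊√(dist(k, Λ(f)))⌋ > Bt, the Galerkin semigroup satisfies ‖∂_k P_t^N f‖² ≤ 2 e^{-At - A n_k} |||f|||², where |||f||| = ∑_i ‖∂_i f‖. -/

import Mathlib

open scoped BigOperators

/-- ℓ¹ distance on ℤ^d. -/
def l1dist {d : ℕ} (i j : Fin d → ℤ) : ℕ := ∑ k, (i k - j k).natAbs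

/-- n-fold matrix power of a kernel on ℤ^d. -/
noncomputable def matpow {ι : Type*} [DecidableEq ι] (M : ι → ι → ℝ) : ℕ → ι → ι → ℝ
  | 0 => fun i j => if i = j then 1 else 0
  | n + 1 => fun i j => ∑' k, matpow M n i k * M k j

lemma l1dist_triangle {d : ℕ} (i j k : Fin d → ℤ) : l1dist i k ≤ l1dist i j + l1dist j k := by
  unfold l1dist
  rw [← Finset.sum_add_distrib]
  apply Finset.sum_le_sum
  intro x _
  have : i x - k x = (i x - j x) + (j x - k x) := by ring
  rw [this]
  exact Int.natAbs_add_le _ _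

lemma l1dist_self {d : ℕ} (i : Fin d → ℤ) : l1dist i i = 0 := by simp [l1dist]

lemma l1dist_add_right {d : ℕ} (m i : Fin d → ℤ) : l1dist (m + i) i = l1dist m 0 := by
  simp [l1dist]

lemma expSummable (d : ℕ) : Summable (fun m : Fin d → ℤ => Real.exp (-(l1dist m 0 : ℝ)/2)) := by
  have h1 : Summable (fun z : ℤ => Real.exp (-(|z| : ℝ)/2)) := by
    have hg : Summable (fun n : ℕ => (Real.exp (-(1:ℝ)/2)) ^ n) :=
      summable_geometric_of_lt_one (Real.exp_nonneg _)
        (by rw [Real.exp_lt_one_iff]; norm_num)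
    have hcg : ∀ n : ℕ, Real.exp (-(|(n:ℤ)| : ℝ)/2) = (Real.exp (-(1:ℝ)/2)) ^ n := by
      intro n
      rw [← Real.exp_nat_mul]
      norm_num [abs_of_nonneg]
      ring_nf
    apply Summable.of_nat_of_neg
    · exact hg.congr fun n => (hcg n).symm
    · apply hg.congr fun n => ?_
      rw [← hcg n]
      norm_num
  have key : ∀ d : ℕ, Summable (fun m : Fin d → ℤ => ∏ k, Real.exp (-(|m k| : ℝ)/2)) := by
    intro d
    induction d with
    | zero => exact .of_finite
    | succ n ih =>
        rw [← (Fin.consEquiv (fun _ : Fin (n+1) => ℤ)).summable_iff]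
        have := summable_mul_of_summable_norm (f := fun z : ℤ => Real.exp (-(|z| : ℝ)/2))
          (g := fun m : Fin n → ℤ => ∏ k, Real.exp (-(|m k| : ℝ)/2)) ?_ ?_
        · apply this.congr
          intro x
          simp [Fin.consEquiv, Fin.prod_univ_succ]
        · simpa [abs_of_nonneg, Real.exp_nonneg] using h1.abs
        · have : ∀ m : Fin n → ℤ, 0 ≤ ∏ k, Real.exp (-(|m k| : ℝ)/2) := fun m =>
            Finset.prod_nonneg fun _ _ => Real.exp_nonneg _
          simpa [Real.norm_eq_abs, abs_of_nonneg, this] using ih.abs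
  apply (key d).congr
  intro m
  rw [← Real.exp_sum]
  congr 1
  push_cast [l1dist, Nat.cast_natAbs, Pi.zero_apply, sub_zero]
  simp [neg_div, Finset.sum_div]

lemma expSummable' {d : ℕ} (i : Fin d → ℤ) :
    Summable (fun j : Fin d → ℤ => Real.exp (-(l1dist j i : ℝ)/2)) := by
  rw [← (Equiv.addRight i).summable_iff]
  apply (expSummable d).congr
  intro m
  simp [Equiv.addRight, l1dist_add_right]

lemma expTsum' {d : ℕ} (i : Fin d → ℤ) :
    (∑' j : Fin d → ℤ, Real.exp (-(l1dist j i : ℝ)/2)) =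
    ∑' m : Fin d → ℤ, Real.exp (-(l1dist m 0 : ℝ)/2) := by
  rw [← (Equiv.addRight i).tsum_eq (fun j => Real.exp (-(l1dist j i : ℝ)/2))]
  apply tsum_congr
  intro m
  simp [Equiv.addRight, l1dist_add_right]

section main

variable {d : ℕ} (η : ℝ) (a : (Fin d → ℤ) → (Fin d → ℤ) → ℝ)

lemma matpow_nonneg (hη : 0 ≤ η) (ha0 : ∀ i j, 0 ≤ a i j) :
    ∀ n (k i : Fin d → ℤ),
      0 ≤ matpow (fun i j => a i j + η * (if i = j then 1 else 0)) n k i := by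
  intro n
  induction n with
  | zero => intro k i; simp only [matpow]; positivity
  | succ n ih =>
      intro k i
      simp only [matpow]
      apply tsum_nonneg
      intro j
      apply mul_nonneg (ih k j)
      have := ha0 j i
      positivity

lemma matpow_bound (hη : 0 ≤ η) (ha0 : ∀ i j, 0 ≤ a i j)
    (hae : ∀ i j, a i j ≤ Real.exp (-(l1dist i j : ℝ))) :
    ∀ n (k i : Fin d → ℤ),
      matpow (fun i j => a i j + η * (if i = j then 1 else 0)) n k i ≤
        ((∑' m : Fin d → ℤ, Real.exp (-(l1dist m 0 : ℝ)/2)) + η) ^ n *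
          Real.exp (-(l1dist k i : ℝ)/2) := by
  set K : ℝ := ∑' m : Fin d → ℤ, Real.exp (-(l1dist m 0 : ℝ)/2) with hK
  have hK0 : 0 ≤ K := tsum_nonneg fun _ => Real.exp_nonneg _
  set S : ℝ := K + η with hSdef
  have hS0 : 0 ≤ S := by positivity
  set M : (Fin d → ℤ) → (Fin d → ℤ) → ℝ :=
    fun i j => a i j + η * (if i = j then 1 else 0) with hM
  have hM0 : ∀ i j, 0 ≤ M i j := by
    intro i j; simp only [hM]; have := ha0 i j; positivity
  intro n
  induction n with
  | zero =>
      intro k i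
      simp only [matpow, pow_zero, one_mul]
      by_cases h : k = i
      · subst h; simp [l1dist_self]
      · simp only [h, if_false]
        positivity
  | succ n ih =>
      intro k i
      simp only [matpow]
      set G : (Fin d → ℤ) → ℝ := fun j =>
        S ^ n * Real.exp (-(l1dist k i : ℝ)/2) *
          (Real.exp (-(l1dist j i : ℝ)/2) + η * (if j = i then 1 else 0)) with hG
      have hGsummable : Summable G := by
        apply Summable.mul_left
        apply Summable.add (expSummable' i)
        apply Summable.mul_left
        exact summable_of_ne_finset_zero (s := {i}) (by intro b hb; simp at hb; simp [hb])
      have hle : ∀ j, matpow M n k j * M j i ≤ G j := by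
        intro j
        have h1 : matpow M n k j * M j i ≤ (S ^ n * Real.exp (-(l1dist k j : ℝ)/2)) * M j i :=
          mul_le_mul_of_nonneg_right (ih k j) (hM0 j i)
        refine h1.trans ?_
        by_cases h : j = i
        · subst h
          simp only [hM, hG, eq_self_iff_true, if_true, mul_one]
          have haj : a j j ≤ 1 := by
            have := hae j j
            simpa [l1dist_self] using this
          have h2 : a j j + η ≤ Real.exp (-(l1dist j j : ℝ)/2) + η := by
            simp [l1dist_self]; linarith
          calc S ^ n * Real.exp (-(l1dist k j : ℝ)/2) * (a j j + η)
              ≤ S ^ n * Real.exp (-(l1dist k j : ℝ)/2) *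
                (Real.exp (-(l1dist j j : ℝ)/2) + η) := by
                apply mul_le_mul_of_nonneg_left h2; positivity
            _ = S ^ n * Real.exp (-(l1dist k j : ℝ)/2) *
                (Real.exp (-(l1dist j j : ℝ)/2) + η) := by ring
        · simp only [hM, hG, if_neg h, mul_zero, add_zero, mul_one]
          have h2 : Real.exp (-(l1dist k j : ℝ)/2) * a j i ≤
              Real.exp (-(l1dist k i : ℝ)/2) * Real.exp (-(l1dist j i : ℝ)/2) := by
            calc Real.exp (-(l1dist k j : ℝ)/2) * a j i
                ≤ Real.exp (-(l1dist k j : ℝ)/2) * Real.exp (-(l1dist j i : ℝ)) :=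
                  mul_le_mul_of_nonneg_left (hae j i) (Real.exp_nonneg _)
              _ = Real.exp (-(l1dist k j : ℝ)/2 + -(l1dist j i : ℝ)) := by
                  rw [← Real.exp_add]
              _ ≤ Real.exp (-(l1dist k i : ℝ)/2 + -(l1dist j i : ℝ)/2) := by
                  apply Real.exp_le_exp.mpr
                  have := l1dist_triangle k j i
                  have : (l1dist k i : ℝ) ≤ (l1dist k j : ℝ) + (l1dist j i : ℝ) := by
                    exact_mod_cast this
                  linarith
              _ = Real.exp (-(l1dist k i : ℝ)/2) * Real.exp (-(l1dist j i : ℝ)/2) := by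
                  rw [← Real.exp_add]
          calc S ^ n * Real.exp (-(l1dist k j : ℝ)/2) * a j i
              = S ^ n * (Real.exp (-(l1dist k j : ℝ)/2) * a j i) := by ring
            _ ≤ S ^ n * (Real.exp (-(l1dist k i : ℝ)/2) * Real.exp (-(l1dist j i : ℝ)/2)) := by
                apply mul_le_mul_of_nonneg_left h2; positivity
            _ = S ^ n * Real.exp (-(l1dist k i : ℝ)/2) * Real.exp (-(l1dist j i : ℝ)/2) := by
                ring
      have hf0 : ∀ j, 0 ≤ matpow M n k j * M j i := fun j =>
        mul_nonneg (matpow_nonneg η a hη ha0 n k j) (hM0 j i)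
      have hfs : Summable (fun j => matpow M n k j * M j i) :=
        Summable.of_nonneg_of_le hf0 hle hGsummable
      calc (∑' j, matpow M n k j * M j i) ≤ ∑' j, G j := Summable.tsum_le_tsum hle hfs hGsummable
        _ = S ^ n * Real.exp (-(l1dist k i : ℝ)/2) *
            ((∑' j : Fin d → ℤ, Real.exp (-(l1dist j i : ℝ)/2)) +
              ∑' j : Fin d → ℤ, η * (if j = i then 1 else 0)) := by
            rw [tsum_mul_left, Summable.tsum_add (expSummable' i)]
            exact Summable.mul_left _
              (summable_of_ne_finset_zero (s := {i}) (by intro b hb; simp at hb; simp [hb]))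
        _ = S ^ n * Real.exp (-(l1dist k i : ℝ)/2) * (K + η) := by
            rw [expTsum' i, tsum_mul_left, tsum_ite_eq i (fun _ => (1:ℝ)), ← hK]
            ring
        _ = S ^ (n+1) * Real.exp (-(l1dist k i : ℝ)/2) := by
            rw [← hSdef]; ring

end main

/-- Finite speed of propagation of information.  Here `c i = ‖∂_i f‖` (supported on the
localization set `Λ` of `f`), `g k t = ‖∂_k P^N_t f‖²`, and the standing gradient
iteration bound `‖∂_k P_t f‖² ≤ ∑_n (tⁿ/n!) ∑_i [(a+ηδ)ⁿ]_{ki} ‖∂_i f‖²` is the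
hypothesis `hstand`; `|||f||| = ∑_{i∈Λ} c i`. -/
theorem stmt13 {d : ℕ} (hd : 1 ≤ d) (η : ℝ) (hη : 0 < η)
    (a : (Fin d → ℤ) → (Fin d → ℤ) → ℝ)
    (ha0 : ∀ i j, 0 ≤ a i j) (hae : ∀ i j, a i j ≤ Real.exp (-(l1dist i j : ℝ)))
    (hrow : ∀ i, ∑' j, a i j ≤ η) (hcol : ∀ j, ∑' i, a i j ≤ η)
    (Λ : Finset (Fin d → ℤ)) (hΛ : Λ.Nonempty)
    (c : (Fin d → ℤ) → ℝ) (hc0 : ∀ i, 0 ≤ c i) (hsupp : ∀ i ∉ Λ, c i = 0)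
    (g : (Fin d → ℤ) → ℝ → ℝ) (hg0 : ∀ k t, 0 ≤ g k t)
    (hstand : ∀ k, ∀ t ≥ (0 : ℝ), g k t ≤ ∑' n : ℕ, t ^ n / (n.factorial : ℝ) *
      ∑' i, matpow (fun i j => a i j + η * (if i = j then 1 else 0)) n k i * (c i) ^ 2)
    (A : ℝ) (hA : 0 < A) (hA4 : A ≤ 1 / 4)
    (k : Fin d → ℤ) (hk : k ∉ Λ) :
    ∃ B : ℝ, 8 ≤ B ∧ ∀ t ≥ (0 : ℝ),
      B * t < (Nat.sqrt (Λ.inf' hΛ fun j => l1dist k j) : ℝ) →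
      g k t ≤ 2 * Real.exp (-A * t - A * (Nat.sqrt (Λ.inf' hΛ fun j => l1dist k j) : ℝ)) *
        (∑ i ∈ Λ, c i) ^ 2 := by
  set K : ℝ := ∑' m : Fin d → ℤ, Real.exp (-(l1dist m 0 : ℝ)/2) with hKdef
  have hK0 : 0 ≤ K := tsum_nonneg fun _ => Real.exp_nonneg _
  set S : ℝ := K + η with hSdef
  have hS0 : 0 ≤ S := by positivity
  refine ⟨max 8 (4 * (S + 1)), le_max_left _ _, ?_⟩
  intro t ht hBt
  set D : ℕ := Λ.inf' hΛ fun j => l1dist k j with hDdef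
  set N : ℕ := Nat.sqrt D with hNdef
  set M : (Fin d → ℤ) → (Fin d → ℤ) → ℝ :=
    fun i j => a i j + η * (if i = j then 1 else 0) with hM
  have hB8 : (8:ℝ) ≤ max 8 (4 * (S + 1)) := le_max_left _ _
  have hB4 : 4 * (S + 1) ≤ max 8 (4 * (S + 1)) := le_max_right _ _
  have hN1 : (1:ℝ) ≤ (N:ℝ) := by
    have : (0:ℝ) < (N:ℝ) := lt_of_le_of_lt (by positivity) hBt
    exact_mod_cast Nat.one_le_iff_ne_zero.mpr (by exact_mod_cast this.ne')
  have hDN : ((N:ℝ))^2 ≤ (D:ℝ) := by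
    have := Nat.sqrt_le' D
    exact_mod_cast this
  set C : ℝ := ∑ i ∈ Λ, (c i)^2 with hCdef
  have hC0 : 0 ≤ C := Finset.sum_nonneg fun i _ => sq_nonneg _
  -- bound each inner sum
  have hinner : ∀ n : ℕ, (∑' i, matpow M n k i * (c i)^2) ≤
      S ^ n * Real.exp (-(D:ℝ)/2) * C := by
    intro n
    have hvanish : ∀ i ∉ Λ, matpow M n k i * (c i)^2 = 0 := by
      intro i hi; rw [hsupp i hi]; ring
    rw [tsum_eq_sum hvanish, hCdef, Finset.mul_sum]
    apply Finset.sum_le_sum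
    intro i hi
    have h1 : matpow M n k i ≤ S ^ n * Real.exp (-(l1dist k i : ℝ)/2) := by
      have := matpow_bound η a hη.le ha0 hae n k i
      rw [← hKdef, ← hSdef] at this
      exact this
    have h2 : Real.exp (-(l1dist k i : ℝ)/2) ≤ Real.exp (-(D:ℝ)/2) := by
      apply Real.exp_le_exp.mpr
      have hDle : (D:ℝ) ≤ (l1dist k i : ℝ) := by
        exact_mod_cast Finset.inf'_le _ hi
      linarith
    calc matpow M n k i * (c i)^2 ≤ (S ^ n * Real.exp (-(l1dist k i : ℝ)/2)) * (c i)^2 :=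
          mul_le_mul_of_nonneg_right h1 (sq_nonneg _)
      _ ≤ (S ^ n * Real.exp (-(D:ℝ)/2)) * (c i)^2 := by
          apply mul_le_mul_of_nonneg_right _ (sq_nonneg _)
          apply mul_le_mul_of_nonneg_left h2; positivity
      _ = S ^ n * Real.exp (-(D:ℝ)/2) * (c i)^2 := by ring
  have hterm : ∀ n : ℕ, t ^ n / (n.factorial : ℝ) * (∑' i, matpow M n k i * (c i)^2) ≤
      (S*t) ^ n / (n.factorial : ℝ) * (Real.exp (-(D:ℝ)/2) * C) := by
    intro n
    have h1 : 0 ≤ t ^ n / (n.factorial : ℝ) := by positivity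
    calc t ^ n / (n.factorial : ℝ) * (∑' i, matpow M n k i * (c i)^2)
        ≤ t ^ n / (n.factorial : ℝ) * (S ^ n * Real.exp (-(D:ℝ)/2) * C) :=
          mul_le_mul_of_nonneg_left (hinner n) h1
      _ = (S*t) ^ n / (n.factorial : ℝ) * (Real.exp (-(D:ℝ)/2) * C) := by
          rw [mul_pow]; ring
  have hterm0 : ∀ n : ℕ, 0 ≤ t ^ n / (n.factorial : ℝ) * (∑' i, matpow M n k i * (c i)^2) := by
    intro n
    apply mul_nonneg (by positivity)
    apply tsum_nonneg
    intro i
    exact mul_nonneg (matpow_nonneg η a hη.le ha0 n k i) (sq_nonneg _)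
  have hRHSsummable : Summable (fun n : ℕ =>
      (S*t) ^ n / (n.factorial : ℝ) * (Real.exp (-(D:ℝ)/2) * C)) :=
    (Real.summable_pow_div_factorial (S*t)).mul_right _
  have hLHSsummable : Summable (fun n : ℕ =>
      t ^ n / (n.factorial : ℝ) * (∑' i, matpow M n k i * (c i)^2)) :=
    Summable.of_nonneg_of_le hterm0 hterm hRHSsummable
  have hexp : (∑' n : ℕ, (S*t) ^ n / (n.factorial : ℝ)) = Real.exp (S*t) := by
    rw [Real.exp_eq_exp_ℝ, NormedSpace.exp_eq_tsum_div]
  have hmain : g k t ≤ Real.exp (S*t) * (Real.exp (-(D:ℝ)/2) * C) := by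
    calc g k t ≤ ∑' n : ℕ, t ^ n / (n.factorial : ℝ) * (∑' i, matpow M n k i * (c i)^2) :=
          hstand k t ht
      _ ≤ ∑' n : ℕ, (S*t) ^ n / (n.factorial : ℝ) * (Real.exp (-(D:ℝ)/2) * C) :=
          Summable.tsum_le_tsum hterm hLHSsummable hRHSsummable
      _ = (∑' n : ℕ, (S*t) ^ n / (n.factorial : ℝ)) * (Real.exp (-(D:ℝ)/2) * C) :=
          tsum_mul_right
      _ = Real.exp (S*t) * (Real.exp (-(D:ℝ)/2) * C) := by rw [hexp]
  -- compare exponents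
  have hCle : C ≤ (∑ i ∈ Λ, c i)^2 := by
    rw [sq, Finset.sum_mul, hCdef]
    apply Finset.sum_le_sum
    intro i hi
    rw [sq]
    apply mul_le_mul_of_nonneg_left _ (hc0 i)
    exact Finset.single_le_sum (fun j _ => hc0 j) hi
  have hexpcmp : S*t + (-(D:ℝ)/2) ≤ -A * t - A * (N:ℝ) := by
    have htN : (4*(S+1)) * t ≤ (N:ℝ) := le_of_lt (lt_of_le_of_lt
      (mul_le_mul_of_nonneg_right hB4 ht) hBt)
    nlinarith [mul_nonneg hS0 ht, mul_nonneg hA.le ht, sq_nonneg ((N:ℝ) - 1),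
      mul_le_mul_of_nonneg_right hA4 ht]
  calc g k t ≤ Real.exp (S*t) * (Real.exp (-(D:ℝ)/2) * C) := hmain
    _ = Real.exp (S*t + (-(D:ℝ)/2)) * C := by rw [Real.exp_add]; ring
    _ ≤ Real.exp (-A * t - A * (N:ℝ)) * (∑ i ∈ Λ, c i)^2 := by
        apply mul_le_mul (Real.exp_le_exp.mpr hexpcmp) hCle hC0 (Real.exp_nonneg _)
    _ ≤ 2 * Real.exp (-A * t - A * (N:ℝ)) * (∑ i ∈ Λ, c i)^2 := by
        nlinarith [Real.exp_nonneg (-A * t - A * (N:ℝ)), sq_nonneg (∑ i ∈ Λ, c i),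
          mul_nonneg (Real.exp_nonneg (-A * t - A * (N:ℝ))) (sq_nonneg (∑ i ∈ Λ, c i))]
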